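/- Let H be a connected signed graph consisting of a circuit C together with two internally disjoint paths P₁ (from u₁ to u₂) and P₂ (from u₃ to an internal vertex v of P₁), where u₁, u₂, u₃ are distinct vertices on C, all edges of P₁ and P₂ are positive, and each of the three arcs u₂Cu₁, u₁Cu₃, u₃Cu₂ contains an even number of negative edges. Write P₁ = u₁P₁₁v ∪ vP₁₂u₂. Then the three circuits B₁ = P₁₁ ∪ P₁₂ ∪ u₂Cu₁, B₂ = P₂ ∪ P₁₁ ∪ u₁Cu₃, B₃ = P₁₂ ∪ P₂ ∪ u₃Cu₂ are all balanced, and each of the three pairs {B₁,B₂}, {B₂,B₃}, {B₃,B₁} covers every edge of H, with each edge of H covered exactly 4 times in total by the three pairs; consequently some pair has length at most (4/3)|E(H)|. -/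

import Mathlib

open SimpleGraph

variable {V : Type*}

/-- `σ e = true` means the edge `e` is negative. Number of negative edges in `E`. -/
noncomputable def negCount (σ : Sym2 V → Bool) (E : Set (Sym2 V)) : ℕ :=
  (E ∩ {e | σ e = true}).ncard

/-- Number of negative edges in a list of edges (with multiplicity). -/
def listNegCount (σ : Sym2 V → Bool) (l : List (Sym2 V)) : ℕ :=
  (l.filter fun e => σ e).length

/-- A circuit: a connected `2`-regular subgraph. -/
def IsCircuit (G : SimpleGraph V) (C : G.Subgraph) : Prop :=
  C.Connected ∧ ∀ v ∈ C.verts, (C.neighborSet v).ncard = 2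

/-- A balanced circuit: even number of negative edges. -/
def IsBalancedCircuit (G : SimpleGraph V) (σ : Sym2 V → Bool) (C : G.Subgraph) : Prop :=
  IsCircuit G C ∧ Even (negCount σ C.edgeSet)

/-- An unbalanced circuit: odd number of negative edges. -/
def IsUnbalancedCircuit (G : SimpleGraph V) (σ : Sym2 V → Bool) (C : G.Subgraph) : Prop :=
  IsCircuit G C ∧ Odd (negCount σ C.edgeSet)

/-- `P` is the subgraph of a (possibly trivial) path from `u` to `v`. -/
def IsPathSubgraph (G : SimpleGraph V) (P : G.Subgraph) (u v : V) : Prop :=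
  ∃ w : G.Walk u v, w.IsPath ∧ P.verts = {x | x ∈ w.support} ∧
    P.edgeSet = {e | e ∈ w.edges}

/-- A barbell: two unbalanced circuits joined by a (possibly trivial) path
meeting the circuits only at its ends. -/
def IsBarbell (G : SimpleGraph V) (σ : Sym2 V → Bool) (H : G.Subgraph) : Prop :=
  ∃ (C₁ C₂ P : G.Subgraph) (u v : V),
    IsUnbalancedCircuit G σ C₁ ∧ IsUnbalancedCircuit G σ C₂ ∧
    IsPathSubgraph G P u v ∧ u ∈ C₁.verts ∧ v ∈ C₂.verts ∧
    P.verts ∩ C₁.verts = {u} ∧ P.verts ∩ C₂.verts = {v} ∧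
    C₁.verts ∩ C₂.verts ⊆ {u} ∩ {v} ∧
    C₁.edgeSet ∩ C₂.edgeSet = ∅ ∧
    H = C₁ ⊔ C₂ ⊔ P

/-- A sign-circuit: a balanced circuit or a barbell. -/
def IsSignCircuit (G : SimpleGraph V) (σ : Sym2 V → Bool) (H : G.Subgraph) : Prop :=
  IsBalancedCircuit G σ H ∨ IsBarbell G σ H

/-- Flow-admissible: every edge lies in a sign-circuit (equivalently, the signed
graph admits a nowhere-zero integer flow). -/
def FlowAdmissible (G : SimpleGraph V) (σ : Sym2 V → Bool) : Prop :=
  ∀ e ∈ G.edgeSet, ∃ H : G.Subgraph, IsSignCircuit G σ H ∧ e ∈ H.edgeSet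

/-- Total length of a family of subgraphs. -/
noncomputable def coverLength (G : SimpleGraph V) (𝓕 : Multiset G.Subgraph) : ℕ :=
  (𝓕.map fun H => H.edgeSet.ncard).sum

/-- The family `𝓕` covers the edge set `E`. -/
def Covers (G : SimpleGraph V) (𝓕 : Multiset G.Subgraph) (E : Set (Sym2 V)) : Prop :=
  ∀ e ∈ E, ∃ H ∈ 𝓕, e ∈ H.edgeSet

/-- Cubic graph: every vertex has degree `3`. -/
def IsCubic (G : SimpleGraph V) : Prop := ∀ v : V, (G.neighborSet v).ncard = 3

/-- `2`-edge-connected: connected and bridgeless. -/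
def TwoEdgeConnected (G : SimpleGraph V) : Prop :=
  G.Connected ∧ ∀ e, ¬ G.IsBridge e

/-- Balanced signed graph: every circuit has an even number of negative edges. -/
def IsBalancedGraph (G : SimpleGraph V) (σ : Sym2 V → Bool) : Prop :=
  ∀ C : G.Subgraph, IsCircuit G C → Even (negCount σ C.edgeSet)

/-- A `2`-factor: a spanning `2`-regular subgraph. -/
def IsTwoFactor (G : SimpleGraph V) (F : G.Subgraph) : Prop :=
  F.IsSpanning ∧ ∀ v : V, (F.neighborSet v).ncard = 2

/-- A proper 3-edge-coloring: edges sharing a vertex get different colors. -/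
def Proper3EdgeColoring (G : SimpleGraph V) (c : Sym2 V → Fin 3) : Prop :=
  ∀ e ∈ G.edgeSet, ∀ f ∈ G.edgeSet, e ≠ f → (∃ x, x ∈ e ∧ x ∈ f) → c e ≠ c f

/-- 3-edge-colorable graph. -/
def ThreeEdgeColorable (G : SimpleGraph V) : Prop :=
  ∃ c : Sym2 V → Fin 3, Proper3EdgeColoring G c

/-- `S` is a segment of the circuit `C` determined by a set `Mv` of vertices
(the vertex set of a component `M`): a maximal subpath of `C` whose endpoints
are attachments of `M` and whose internal vertices are not in `M`. -/
def IsSegment (G : SimpleGraph V) (C : G.Subgraph) (Mv : Set V) (S : G.Subgraph) : Prop :=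
  ∃ (a b : V) (w : G.Walk a b),
    w.edges ≠ [] ∧ w.support.tail.Nodup ∧
    (∀ e ∈ w.edges, e ∈ C.edgeSet) ∧
    a ∈ Mv ∧ b ∈ Mv ∧
    (∀ x ∈ w.support, x ∈ Mv → x = a ∨ x = b) ∧
    S.verts = {x | x ∈ w.support} ∧ S.edgeSet = {e | e ∈ w.edges}


lemma lncA (σ : Sym2 V → Bool) (l₁ l₂ : List (Sym2 V)) :
    listNegCount σ (l₁ ++ l₂) = listNegCount σ l₁ + listNegCount σ l₂ := by
  simp [listNegCount]

lemma lncR (σ : Sym2 V → Bool) (l : List (Sym2 V)) :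
    listNegCount σ l.reverse = listNegCount σ l := by
  simp [listNegCount]

lemma lncZ (σ : Sym2 V → Bool) {l : List (Sym2 V)} (h : ∀ e ∈ l, σ e = false) :
    listNegCount σ l = 0 := by
  simp only [listNegCount, List.length_eq_zero_iff, List.filter_eq_nil_iff]
  intro e he
  simp [h e he]

/-- theta-plus-chord configuration of Case 1 of Lemma 2.7.
The circuit `C` is decomposed into clockwise arcs `d₁ : u₁Cu₂`, `d₂ : u₂Cu₃`,
`d₃ : u₃Cu₁`; `p₁₁ : u₁P₁₁v`, `p₁₂ : vP₁₂u₂`, `p₂ : u₃P₂v` are internally disjoint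
positive paths. Then `B₁ = P₁₁∪P₁₂∪u₂Cu₁`, `B₂ = P₂∪P₁₁∪u₁Cu₃`, `B₃ = P₁₂∪P₂∪u₃Cu₂`
are balanced closed walks, each pair of them covers every edge of
`H = C ∪ P₁₁ ∪ P₁₂ ∪ P₂`, every edge of `H` is covered exactly 4 times in total by
the three pairs, and some pair has length at most `(4/3)|E(H)|`. -/
theorem stmt15 {V : Type*} [Fintype V] [DecidableEq V]
    (G : SimpleGraph V) (σ : Sym2 V → Bool)
    {u₁ u₂ u₃ v : V} (hu12 : u₁ ≠ u₂) (hu13 : u₁ ≠ u₃) (hu23 : u₂ ≠ u₃)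
    (hv1 : v ≠ u₁) (hv2 : v ≠ u₂) (hv3 : v ≠ u₃)
    (d₁ : G.Walk u₁ u₂) (d₂ : G.Walk u₂ u₃) (d₃ : G.Walk u₃ u₁)
    (p₁₁ : G.Walk u₁ v) (p₁₂ : G.Walk v u₂) (p₂ : G.Walk u₃ v)
    (hC : (d₁.append (d₂.append d₃)).IsCycle)
    (hP1 : (p₁₁.append p₁₂).IsPath) (hp2 : p₂.IsPath)
    (hdisj : [d₁.edges, d₂.edges, d₃.edges, p₁₁.edges, p₁₂.edges,
      p₂.edges].Pairwise List.Disjoint)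
    (hpos : ∀ e ∈ p₁₁.edges ++ p₁₂.edges ++ p₂.edges, σ e = false)
    (hev1 : Even (listNegCount σ (d₂.append d₃).edges))
    (hev2 : Even (listNegCount σ (d₁.append d₂).edges))
    (hev3 : Even (listNegCount σ (d₃.append d₁).edges)) :
    ∀ (B₁ : G.Walk u₁ u₁) (B₂ : G.Walk u₃ u₃) (B₃ : G.Walk v v)
      (EH : Set (Sym2 V)),
      B₁ = p₁₁.append (p₁₂.append (d₂.append d₃)) →
      B₂ = p₂.append (p₁₁.reverse.append (d₁.append d₂)) →
      B₃ = p₂.reverse.append ((d₃.append d₁).append p₁₂.reverse) →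
      EH = {e | e ∈ d₁.edges ++ d₂.edges ++ d₃.edges ++ p₁₁.edges ++
        p₁₂.edges ++ p₂.edges} →
      Even (listNegCount σ B₁.edges) ∧
      Even (listNegCount σ B₂.edges) ∧
      Even (listNegCount σ B₃.edges) ∧
      (∀ e ∈ EH, e ∈ B₁.edges ∨ e ∈ B₂.edges) ∧
      (∀ e ∈ EH, e ∈ B₂.edges ∨ e ∈ B₃.edges) ∧
      (∀ e ∈ EH, e ∈ B₃.edges ∨ e ∈ B₁.edges) ∧
      (∀ e ∈ EH, 2 * (B₁.edges.count e + B₂.edges.count e + B₃.edges.count e) = 4) ∧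
      3 * min (B₁.edges.length + B₂.edges.length)
          (min (B₂.edges.length + B₃.edges.length)
            (B₃.edges.length + B₁.edges.length)) ≤ 4 * EH.ncard := by
  intro B₁ B₂ B₃ EH hB₁ hB₂ hB₃ hEH
  subst hB₁; subst hB₂; subst hB₃; subst hEH
  -- disjointness facts
  simp only [List.pairwise_cons, List.mem_cons, List.not_mem_nil, List.mem_singleton,
    forall_eq_or_imp, forall_eq, List.Pairwise.nil, and_true, IsEmpty.forall_iff] at hdisj
  obtain ⟨⟨D12, D13, D14, D15, D16⟩, ⟨D23, D24, D25, D26⟩, ⟨D34, D35, D36⟩, ⟨D45, D46⟩, D56⟩ :=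
    hdisj
  have D16 := D16.1; have D26 := D26.1; have D36 := D36.1
  have D46 := D46.1; have D56 := D56.1.1
  -- nodup facts
  have hCn := hC.edges_nodup
  rw [Walk.edges_append, Walk.edges_append] at hCn
  have nd1 : d₁.edges.Nodup := (List.nodup_append.mp hCn).1
  have nd23 := (List.nodup_append.mp hCn).2.1
  have nd2 : d₂.edges.Nodup := (List.nodup_append.mp nd23).1
  have nd3 : d₃.edges.Nodup := (List.nodup_append.mp nd23).2.1
  have hPn := hP1.edges_nodup
  rw [Walk.edges_append] at hPn
  have nd4 : p₁₁.edges.Nodup := (List.nodup_append.mp hPn).1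
  have nd5 : p₁₂.edges.Nodup := (List.nodup_append.mp hPn).2.1
  have nd6 : p₂.edges.Nodup := hp2.edges_nodup
  -- positivity facts
  have hpos4 : ∀ e ∈ p₁₁.edges, σ e = false := fun e he => hpos e (by simp [he])
  have hpos5 : ∀ e ∈ p₁₂.edges, σ e = false := fun e he => hpos e (by simp [he])
  have hpos6 : ∀ e ∈ p₂.edges, σ e = false := fun e he => hpos e (by simp [he])
  refine ⟨?_, ?_, ?_, ?_, ?_, ?_, ?_, ?_⟩
  · rw [Walk.edges_append, Walk.edges_append, lncA, lncA, lncZ σ hpos4, lncZ σ hpos5]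
    simpa using hev1
  · rw [Walk.edges_append, Walk.edges_append, Walk.edges_reverse, lncA, lncA,
      lncZ σ hpos6, lncR]
    rw [lncZ σ hpos4]
    simpa using hev2
  · rw [Walk.edges_append, Walk.edges_append, Walk.edges_reverse, Walk.edges_reverse,
      lncA, lncA, lncR, lncR, lncZ σ hpos6, lncZ σ hpos5]
    simpa using hev3
  · intro e he
    simp only [Set.mem_setOf_eq, List.mem_append] at he
    simp only [Walk.edges_append, Walk.edges_reverse, List.mem_append, List.mem_reverse]
    tauto
  · intro e he
    simp only [Set.mem_setOf_eq, List.mem_append] at he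
    simp only [Walk.edges_append, Walk.edges_reverse, List.mem_append, List.mem_reverse]
    tauto
  · intro e he
    simp only [Set.mem_setOf_eq, List.mem_append] at he
    simp only [Walk.edges_append, Walk.edges_reverse, List.mem_append, List.mem_reverse]
    tauto
  · intro e he
    simp only [Set.mem_setOf_eq, List.mem_append] at he
    simp only [Walk.edges_append, Walk.edges_reverse, List.count_append, List.count_reverse]
    have key : ∀ l : List (Sym2 V), l.Nodup → l.count e = if e ∈ l then 1 else 0 := by
      intro l hl
      split
      · exact List.count_eq_one_of_mem hl ‹_›
      · exact List.count_eq_zero.mpr ‹_›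
    rw [key _ nd1, key _ nd2, key _ nd3, key _ nd4, key _ nd5, key _ nd6]
    rcases he with ((((h|h)|h)|h)|h)|h
    · rw [if_pos h, if_neg (D12 h), if_neg (D13 h), if_neg (D14 h), if_neg (D15 h),
        if_neg (D16 h)]
    · rw [if_pos h, if_neg (fun hx => D12 hx h), if_neg (D23 h), if_neg (D24 h),
        if_neg (D25 h), if_neg (D26 h)]
    · rw [if_pos h, if_neg (fun hx => D13 hx h), if_neg (fun hx => D23 hx h),
        if_neg (D34 h), if_neg (D35 h), if_neg (D36 h)]
    · rw [if_pos h, if_neg (fun hx => D14 hx h), if_neg (fun hx => D24 hx h),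
        if_neg (fun hx => D34 hx h), if_neg (D45 h), if_neg (D46 h)]
    · rw [if_pos h, if_neg (fun hx => D15 hx h), if_neg (fun hx => D25 hx h),
        if_neg (fun hx => D35 hx h), if_neg (fun hx => D45 hx h), if_neg (D56 h)]
    · rw [if_pos h, if_neg (fun hx => D16 hx h), if_neg (fun hx => D26 hx h),
        if_neg (fun hx => D36 hx h), if_neg (fun hx => D46 hx h),
        if_neg (fun hx => D56 hx h)]
  · have hLnd : (d₁.edges ++ d₂.edges ++ d₃.edges ++ p₁₁.edges ++ p₁₂.edges ++
        p₂.edges).Nodup := by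
      simp only [List.nodup_append', List.disjoint_append_left]
      exact ⟨⟨⟨⟨⟨nd1, nd2, D12⟩, nd3, D13, D23⟩, nd4, ⟨D14, D24⟩, D34⟩, nd5,
        ⟨⟨D15, D25⟩, D35⟩, D45⟩, nd6, ⟨⟨⟨D16, D26⟩, D36⟩, D46⟩, D56⟩
    have hNC : {e | e ∈ d₁.edges ++ d₂.edges ++ d₃.edges ++ p₁₁.edges ++ p₁₂.edges ++
        p₂.edges}.ncard = d₁.edges.length + d₂.edges.length + d₃.edges.length +
        p₁₁.edges.length + p₁₂.edges.length + p₂.edges.length := by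
      rw [show {e | e ∈ d₁.edges ++ d₂.edges ++ d₃.edges ++ p₁₁.edges ++ p₁₂.edges ++
          p₂.edges} = ↑(d₁.edges ++ d₂.edges ++ d₃.edges ++ p₁₁.edges ++ p₁₂.edges ++
          p₂.edges).toFinset by ext; simp, Set.ncard_coe_finset,
        List.toFinset_card_of_nodup hLnd]
      simp only [List.length_append]
    have l1 : (p₁₁.append (p₁₂.append (d₂.append d₃))).edges.length =
        p₁₁.edges.length + (p₁₂.edges.length + (d₂.edges.length + d₃.edges.length)) := by
      simp [Walk.edges_append]
    have l2 : (p₂.append (p₁₁.reverse.append (d₁.append d₂))).edges.length =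
        p₂.edges.length + (p₁₁.edges.length + (d₁.edges.length + d₂.edges.length)) := by
      simp [Walk.edges_append]
    have l3 : (p₂.reverse.append ((d₃.append d₁).append p₁₂.reverse)).edges.length =
        p₂.edges.length + ((d₃.edges.length + d₁.edges.length) + p₁₂.edges.length) := by
      simp only [Walk.edges_append, Walk.edges_reverse, List.length_append,
        List.length_reverse]
    omega
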